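/- Let m ≥ 2 be an integer, p, q integers with 1 ≤ p ≤ m−1, 1 ≤ q ≤ m+1 and p ≡ q (mod 2), and set p' = m−p, q' = m+2−q. Then γ^m_{−p,q}(0) = h^m_{p,q} + pq/2 and γ^m_{−p,q}(−1) = h^m_{p,q} + p'q'/2; moreover, for every integer n ≠ 0 one has γ^m_{p,q}(n) > h^m_{p,q} + max(pq, p'q')/2, and for every integer n ∉ {0, −1} one has γ^m_{−p,q}(n) > h^m_{p,q} + max(pq, p'q')/2. In other words, γ^m_{p,q}(0), γ^m_{−p,q}(0) and γ^m_{−p,q}(−1) are the three lowest numbers of the set {γ^m_{p,q}(n), γ^m_{−p,q}(n) : n ∈ ℤ}. -/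
import Mathlib


/-- `γ^m_{p,q}(n) = ((2m(m+2)n − (m+2)p + mq)² − 4) / (8m(m+2))`. -/
noncomputable def gammaPQ (m : ℝ) (p q n : ℤ) : ℝ :=
  ((2 * m * (m + 2) * (n : ℝ) - (m + 2) * (p : ℝ) + m * (q : ℝ)) ^ 2 - 4) / (8 * m * (m + 2))

/-- `h^m_{p,q} = (((m+2)p − mq)² − 4) / (8m(m+2))`. -/
noncomputable def hPQ (m : ℝ) (p q : ℤ) : ℝ :=
  (((m + 2) * (p : ℝ) - m * (q : ℝ)) ^ 2 - 4) / (8 * m * (m + 2))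

lemma gammaPQ_eq_hPQ_add (m : ℝ) (h0 : m ≠ 0) (h2 : m + 2 ≠ 0) (p q n : ℤ) :
    gammaPQ m p q n = hPQ m p q +
      ((n : ℝ) * (m * (m + 2) * (n : ℝ) - ((m + 2) * (p : ℝ) - m * (q : ℝ)))) / 2 := by
  unfold gammaPQ hPQ
  field_simp
  ring

lemma gammaPQ_neg_eq_hPQ_add (m : ℝ) (h0 : m ≠ 0) (h2 : m + 2 ≠ 0) (p q n : ℤ) :
    gammaPQ m (-p) q n = hPQ m p q +
      (m * (m + 2) * (n : ℝ) ^ 2 + (n : ℝ) * ((m + 2) * (p : ℝ) + m * (q : ℝ)) + (p : ℝ) * q) / 2 := by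
  unfold gammaPQ hPQ
  push_cast
  field_simp
  ring

lemma key1 (m p q n : ℤ) (hm : 2 ≤ m) (hp1 : 1 ≤ p) (hp2 : p ≤ m - 1)
    (hq1 : 1 ≤ q) (hq2 : q ≤ m + 1) (hn : n ≠ 0) :
    max (p * q) ((m - p) * (m + 2 - q)) < n * (m * (m + 2) * n - ((m + 2) * p - m * q)) := by
  have hM : (0:ℤ) < m * (m + 2) := by nlinarith
  have hA1 : (m + 2) * p - m * q ≤ m * m - 2 := by nlinarith
  have hA2 : -(m * m) + 2 ≤ (m + 2) * p - m * q := by nlinarith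
  rcases hn.lt_or_gt with h | h
  · have h1 : n ≤ -1 := by omega
    have hf : (0:ℤ) ≤ m * (m + 2) * (-n + 1) + ((m + 2) * p - m * q) := by
      nlinarith [mul_nonneg (by omega : (0:ℤ) ≤ -n - 1) hM.le]
    refine max_lt ?_ ?_ <;>
      nlinarith [mul_nonneg (by omega : (0:ℤ) ≤ -n - 1) hf,
        mul_pos (by omega : (0:ℤ) < m + p) (by omega : (0:ℤ) < m + 2 - q),
        mul_pos (by omega : (0:ℤ) < p) (by omega : (0:ℤ) < 2 * (m + 2) - q)]
  · have h1 : 1 ≤ n := by omega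
    have hf : (0:ℤ) ≤ m * (m + 2) * (n + 1) - ((m + 2) * p - m * q) := by
      nlinarith [mul_nonneg (by omega : (0:ℤ) ≤ n - 1) hM.le]
    refine max_lt ?_ ?_ <;>
      nlinarith [mul_nonneg (by omega : (0:ℤ) ≤ n - 1) hf,
        mul_pos (by omega : (0:ℤ) < m - p) (by omega : (0:ℤ) < m + 2 + q),
        mul_pos (by omega : (0:ℤ) < m - p) (by omega : (0:ℤ) < q),
        mul_pos (by omega : (0:ℤ) < m - p) (by omega : (0:ℤ) < m + 2 - q)]

lemma key2 (m p q n : ℤ) (hm : 2 ≤ m) (hp1 : 1 ≤ p) (hp2 : p ≤ m - 1)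
    (hq1 : 1 ≤ q) (hq2 : q ≤ m + 1) (hn0 : n ≠ 0) (hn1 : n ≠ -1) :
    max (p * q) ((m - p) * (m + 2 - q)) <
      m * (m + 2) * n ^ 2 + n * ((m + 2) * p + m * q) + p * q := by
  have hM : (0:ℤ) < m * (m + 2) := by nlinarith
  have hB1 : (m + 2) * p + m * q ≤ 2 * m ^ 2 + 2 * m - 2 := by nlinarith
  have hB0 : 2 * m + 2 ≤ (m + 2) * p + m * q := by nlinarith
  rcases (lt_or_gt_of_ne hn0) with h | h
  · have h1 : n ≤ -2 := by omega
    have hf : (0:ℤ) ≤ m * (m + 2) * (-n + 2) - ((m + 2) * p + m * q) := by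
      nlinarith [mul_nonneg (by omega : (0:ℤ) ≤ -n - 2) hM.le]
    refine max_lt ?_ ?_ <;>
      nlinarith [mul_nonneg (by omega : (0:ℤ) ≤ -n - 2) hf,
        mul_pos (by omega : (0:ℤ) < m - p) (by omega : (0:ℤ) < m + 2 - q)]
  · have h1 : 1 ≤ n := by omega
    have hf : (0:ℤ) ≤ m * (m + 2) * (n + 1) + ((m + 2) * p + m * q) := by
      nlinarith [mul_nonneg (by omega : (0:ℤ) ≤ n - 1) hM.le]
    refine max_lt ?_ ?_ <;>
      nlinarith [mul_nonneg (by omega : (0:ℤ) ≤ n - 1) hf,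
        mul_pos (by omega : (0:ℤ) < m - p) (by omega : (0:ℤ) < m + 2 - q),
        mul_pos (by omega : (0:ℤ) < p) (by omega : (0:ℤ) < q)]

/-- For `m ≥ 2`, `1 ≤ p ≤ m−1`, `1 ≤ q ≤ m+1`, `p ≡ q (mod 2)`, `p' = m−p`, `q' = m+2−q`:
`γ^m_{−p,q}(0) = h^m_{p,q} + pq/2`, `γ^m_{−p,q}(−1) = h^m_{p,q} + p'q'/2`, and
`γ^m_{p,q}(0)`, `γ^m_{−p,q}(0)`, `γ^m_{−p,q}(−1)` are the three lowest numbers of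
`{γ^m_{p,q}(n), γ^m_{−p,q}(n) : n ∈ ℤ}`. -/
theorem gamma_three_lowest (m : ℤ) (hm : 2 ≤ m) (p q : ℤ)
    (hp1 : 1 ≤ p) (hp2 : p ≤ m - 1) (hq1 : 1 ≤ q) (hq2 : q ≤ m + 1)
    (hpar : p % 2 = q % 2) :
    gammaPQ (m : ℝ) (-p) q 0 = hPQ (m : ℝ) p q + (p : ℝ) * q / 2 ∧
    gammaPQ (m : ℝ) (-p) q (-1) = hPQ (m : ℝ) p q + ((m : ℝ) - p) * ((m : ℝ) + 2 - q) / 2 ∧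
    (∀ n : ℤ, n ≠ 0 →
      hPQ (m : ℝ) p q + max ((p : ℝ) * q) (((m : ℝ) - p) * ((m : ℝ) + 2 - q)) / 2 <
        gammaPQ (m : ℝ) p q n) ∧
    (∀ n : ℤ, n ≠ 0 → n ≠ -1 →
      hPQ (m : ℝ) p q + max ((p : ℝ) * q) (((m : ℝ) - p) * ((m : ℝ) + 2 - q)) / 2 <
        gammaPQ (m : ℝ) (-p) q n) := by
  have h0 : (m : ℝ) ≠ 0 := by exact_mod_cast (by omega : m ≠ 0)
  have h2 : (m : ℝ) + 2 ≠ 0 := by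
    have : (2:ℝ) ≤ (m:ℝ) := by exact_mod_cast hm
    linarith
  have hcast : max ((p : ℝ) * q) (((m : ℝ) - p) * ((m : ℝ) + 2 - q)) =
      ((max (p * q) ((m - p) * (m + 2 - q)) : ℤ) : ℝ) := by
    push_cast
    rfl
  refine ⟨?_, ?_, ?_, ?_⟩
  · rw [gammaPQ_neg_eq_hPQ_add _ h0 h2]
    push_cast
    ring
  · rw [gammaPQ_neg_eq_hPQ_add _ h0 h2]
    push_cast
    ring
  · intro n hn
    rw [gammaPQ_eq_hPQ_add _ h0 h2, hcast]
    gcongr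
    exact_mod_cast key1 m p q n hm hp1 hp2 hq1 hq2 hn
  · intro n hn0 hn1
    rw [gammaPQ_neg_eq_hPQ_add _ h0 h2, hcast]
    gcongr
    exact_mod_cast key2 m p q n hm hp1 hp2 hq1 hq2 hn0 hn1
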